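/- Let M be an n-vertex connected combinatorial 2-manifold with every vertex of degree 6 and n > 7. Then for any vertex u there exist faces uab and vab of M such that uv is not an edge of M. -/

import Mathlib

open scoped Classical
noncomputable section

/-- A finite 2-dimensional simplicial complex given by its triangular faces. -/
structure SComplex (V : Type) [DecidableEq V] [Fintype V] where
  faces : Finset (Finset V)
  card_eq : ∀ F ∈ faces, F.card = 3

namespace SComplex

variable {V : Type} [DecidableEq V] [Fintype V]

/-- The edges: the 2-element subsets of faces. -/
def edges (K : SComplex V) : Finset (Finset V) :=
  (Finset.univ : Finset (Finset V)).filter fun e => e.card = 2 ∧ ∃ F ∈ K.faces, e ⊆ F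

/-- The degree of a vertex: the number of edges containing it. -/
def degree (K : SComplex V) (v : V) : ℕ := (K.edges.filter fun e => v ∈ e).card

/-- `K` triangulates a closed surface: every vertex lies in a face, every edge lies in
exactly two faces, and the link of every vertex is a single cycle (encoded by
2-regularity, which follows from the edge condition, together with connectedness of
the link graph). -/
def IsClosedSurface (K : SComplex V) : Prop :=
  (∀ v : V, ∃ F ∈ K.faces, v ∈ F) ∧
  (∀ e ∈ K.edges, (K.faces.filter fun F => e ⊆ F).card = 2) ∧
  (∀ v a b : V, ({v, a} : Finset V) ∈ K.edges → ({v, b} : Finset V) ∈ K.edges →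
    Relation.ReflTransGen (fun x y => ({v, x, y} : Finset V) ∈ K.faces) a b)

/-- Connectedness of the complex. -/
def Connected (K : SComplex V) : Prop :=
  ∀ u v : V, Relation.ReflTransGen (fun a b => ({a, b} : Finset V) ∈ K.edges) u v

/-- The Euler characteristic `f₀ - f₁ + f₂`. -/
def euler (K : SComplex V) : ℤ :=
  (Fintype.card V : ℤ) - (K.edges.card : ℤ) + (K.faces.card : ℤ)

end SComplex

namespace OppFaces

open SComplex Finset
set_option linter.unusedSectionVars false

variable {V : Type} [DecidableEq V] [Fintype V]

lemma t12 (a b c : V) : ({a,b,c} : Finset V) = {b,a,c} := by ext x; simp; tauto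
lemma t23 (a b c : V) : ({a,b,c} : Finset V) = {a,c,b} := by ext x; simp; tauto
lemma t13 (a b c : V) : ({a,b,c} : Finset V) = {c,b,a} := by ext x; simp; tauto
lemma trot (a b c : V) : ({a,b,c} : Finset V) = {b,c,a} := by ext x; simp; tauto
lemma trot' (a b c : V) : ({a,b,c} : Finset V) = {c,a,b} := by ext x; simp; tauto
lemma p12 (a b : V) : ({a,b} : Finset V) = {b,a} := Finset.pair_comm a b

variable {K : SComplex V}

lemma face_ne {a b c : V} (h : ({a,b,c} : Finset V) ∈ K.faces) :
    a ≠ b ∧ a ≠ c ∧ b ≠ c := by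
  have h3 := K.card_eq _ h
  refine ⟨?_, ?_, ?_⟩ <;> rintro rfl
  · rw [show ({a,a,c} : Finset V) = {a,c} by ext x; simp; try tauto] at h3
    have h4 := Finset.card_insert_le a ({c} : Finset V)
    rw [Finset.card_singleton] at h4; omega
  · rw [show ({a,b,a} : Finset V) = {a,b} by ext x; simp; try tauto] at h3
    have h4 := Finset.card_insert_le a ({b} : Finset V)
    rw [Finset.card_singleton] at h4; omega
  · rw [show ({a,b,b} : Finset V) = {a,b} by ext x; simp; try tauto] at h3
    have h4 := Finset.card_insert_le a ({b} : Finset V)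
    rw [Finset.card_singleton] at h4; omega

lemma pair_card {a b : V} (h : a ≠ b) : ({a,b} : Finset V).card = 2 := by
  rw [Finset.card_insert_of_notMem (by simp [h]), Finset.card_singleton]

lemma edge_of_face {a b c : V} (h : ({a,b,c} : Finset V) ∈ K.faces) (hab : a ≠ b) :
    ({a,b} : Finset V) ∈ K.edges := by
  simp only [edges, Finset.mem_filter, Finset.mem_univ, true_and]
  exact ⟨pair_card hab, ⟨_, h, by intro x hx; simp at hx ⊢; tauto⟩⟩

lemma edge_ne {a b : V} (h : ({a,b} : Finset V) ∈ K.edges) : a ≠ b := by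
  simp only [edges, Finset.mem_filter] at h
  rintro rfl
  have : ({a,a} : Finset V) = {a} := by simp
  rw [this] at h; simp at h

lemma edge_comm {a b : V} (h : ({a,b} : Finset V) ∈ K.edges) :
    ({b,a} : Finset V) ∈ K.edges := by rwa [p12] at h

/-- the two completions of an edge -/
lemma two_completions (hK : K.IsClosedSurface) {a b : V}
    (he : ({a,b} : Finset V) ∈ K.edges) :
    ∃ p q : V, p ≠ q ∧ p ≠ a ∧ p ≠ b ∧ q ≠ a ∧ q ≠ b ∧
      ({a,b,p} : Finset V) ∈ K.faces ∧ ({a,b,q} : Finset V) ∈ K.faces ∧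
      ∀ y, ({a,b,y} : Finset V) ∈ K.faces → y = p ∨ y = q := by
  have hab : a ≠ b := edge_ne he
  have h2 := hK.2.1 _ he
  rw [Finset.card_eq_two] at h2
  obtain ⟨F, G, hFG, hFGeq⟩ := h2
  have hF : F ∈ K.faces ∧ ({a,b} : Finset V) ⊆ F := by
    have : F ∈ K.faces.filter fun F => ({a,b} : Finset V) ⊆ F := by rw [hFGeq]; simp
    simpa using this
  have hG : G ∈ K.faces ∧ ({a,b} : Finset V) ⊆ G := by
    have : G ∈ K.faces.filter fun F => ({a,b} : Finset V) ⊆ F := by rw [hFGeq]; simp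
    simpa using this
  -- extract third vertices
  have hext : ∀ H : Finset V, H ∈ K.faces → ({a,b} : Finset V) ⊆ H →
      ∃ p, p ≠ a ∧ p ≠ b ∧ H = {a,b,p} := by
    intro H hH hsub
    have h3 := K.card_eq _ hH
    have hcard : (H \ {a,b}).card = 1 := by
      rw [Finset.card_sdiff_of_subset hsub, h3, pair_card hab]
    rw [Finset.card_eq_one] at hcard
    obtain ⟨p, hp⟩ := hcard
    have hpmem : p ∈ H \ ({a,b} : Finset V) := by rw [hp]; simp
    simp only [Finset.mem_sdiff, Finset.mem_insert, Finset.mem_singleton] at hpmem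
    refine ⟨p, by tauto, by tauto, ?_⟩
    ext x
    constructor
    · intro hx
      by_cases hx2 : x ∈ ({a,b} : Finset V)
      · simp at hx2 ⊢; tauto
      · have hmem : x ∈ H \ ({a,b} : Finset V) := Finset.mem_sdiff.2 ⟨hx, hx2⟩
        rw [hp] at hmem; simp at hmem; simp [hmem]
    · intro hx
      simp at hx
      rcases hx with rfl | rfl | rfl
      · exact hsub (by simp)
      · exact hsub (by simp)
      · exact hpmem.1
  obtain ⟨p, hpa, hpb, hFp⟩ := hext F hF.1 hF.2
  obtain ⟨q, hqa, hqb, hGq⟩ := hext G hG.1 hG.2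
  have hpq : p ≠ q := by rintro rfl; exact hFG (hFp.trans hGq.symm)
  refine ⟨p, q, hpq, hpa, hpb, hqa, hqb, hFp ▸ hF.1, hGq ▸ hG.1, ?_⟩
  intro y hy
  have hymem : ({a,b,y} : Finset V) ∈ K.faces.filter fun F => ({a,b} : Finset V) ⊆ F := by
    simp [hy]
  rw [hFGeq] at hymem
  simp at hymem
  have hyab : y ≠ a ∧ y ≠ b := by
    have := face_ne hy; tauto
  rcases hymem with h | h
  · left
    rw [hFp] at h
    have : y ∈ ({a,b,p} : Finset V) := by rw [← h]; simp
    simp at this; tauto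
  · right
    rw [hGq] at h
    have : y ∈ ({a,b,q} : Finset V) := by rw [← h]; simp
    simp at this; tauto

lemma completions_determined (hK : K.IsClosedSurface) {a b p q : V} (hpq : p ≠ q)
    (hp : ({a,b,p} : Finset V) ∈ K.faces) (hq : ({a,b,q} : Finset V) ∈ K.faces) :
    ∀ y, ({a,b,y} : Finset V) ∈ K.faces → y = p ∨ y = q := by
  have hab : a ≠ b := (face_ne hp).1
  obtain ⟨p', q', h1, _, _, _, _, _, _, hall⟩ := two_completions hK (edge_of_face hp hab)
  intro y hy
  rcases hall p hp with rfl | rfl <;> rcases hall q hq with h | h <;>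
    rcases hall y hy with rfl | rfl <;> tauto

lemma other_completion (hK : K.IsClosedSurface) {a b c : V}
    (hf : ({a,b,c} : Finset V) ∈ K.faces) :
    ∃ d, d ≠ c ∧ d ≠ a ∧ d ≠ b ∧ ({a,b,d} : Finset V) ∈ K.faces ∧
      ∀ y, ({a,b,y} : Finset V) ∈ K.faces → y = c ∨ y = d := by
  have hab : a ≠ b := (face_ne hf).1
  obtain ⟨p, q, hpq, hpa, hpb, hqa, hqb, hp, hq, hall⟩ :=
    two_completions hK (edge_of_face hf hab)
  rcases hall c hf with h | h
  · subst h
    exact ⟨q, hpq.symm, hqa, hqb, hq, hall⟩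
  · subst h
    refine ⟨p, hpq, hpa, hpb, hp, fun y hy => ?_⟩
    exact (hall y hy).symm

/-- neighbours of a vertex -/
def Nb (K : SComplex V) (v : V) : Finset V :=
  Finset.univ.filter fun x => ({v,x} : Finset V) ∈ K.edges

lemma mem_Nb {v x : V} : x ∈ Nb K v ↔ ({v,x} : Finset V) ∈ K.edges := by
  simp [Nb]

lemma Nb_card (hd : ∀ v : V, K.degree v = 6) (v : V) : (Nb K v).card = 6 := by
  rw [← hd v, degree]
  apply Finset.card_bij (fun x _ => ({v,x} : Finset V))
  · intro a ha
    simp only [mem_Nb] at ha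
    simp [ha]
  · intro a ha b hb hab
    simp only [mem_Nb] at ha hb
    have hav : a ≠ v := (edge_ne ha).symm
    have : a ∈ ({v,b} : Finset V) := by rw [← hab]; simp
    simp at this; tauto
  · intro e he
    simp only [Finset.mem_filter] at he
    obtain ⟨he, hve⟩ := he
    have hc2 : e.card = 2 := by
      simp only [edges, Finset.mem_filter] at he; tauto
    rw [Finset.card_eq_two] at hc2
    obtain ⟨x, y, hxy, rfl⟩ := hc2
    simp at hve
    rcases hve with h | h
    · exact ⟨y, by rw [mem_Nb, h]; exact he, by rw [h]⟩
    · exact ⟨x, by rw [mem_Nb, h, p12]; exact he, by rw [h]; exact p12 y x⟩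

lemma Nb_eq (hd : ∀ v : V, K.degree v = 6) {v : V} {s : Finset V}
    (hsub : s ⊆ Nb K v) (hcard : s.card = 6) : Nb K v = s :=
  (Finset.eq_of_subset_of_card_le hsub (by rw [hcard, Nb_card hd])).symm

/-- closure lemma for links -/
lemma link_closure (hK : K.IsClosedSurface) (v : V) (T : Finset V)
    (hcl : ∀ x ∈ T, ∀ y, ({v,x,y} : Finset V) ∈ K.faces → y ∈ T)
    (a : V) (ha : a ∈ T) (he : ({v,a} : Finset V) ∈ K.edges) :
    Nb K v ⊆ T := by
  intro b hb
  rw [mem_Nb] at hb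
  have h := hK.2.2 v a b he hb
  clear hb
  induction h with
  | refl => exact ha
  | tail _ h2 ih => exact hcl _ ih _ h2

lemma closed_contra (hK : K.IsClosedSurface) (hd : ∀ v : V, K.degree v = 6)
    (v : V) (T : Finset V)
    (hcl : ∀ x ∈ T, ∀ y, ({v,x,y} : Finset V) ∈ K.faces → y ∈ T)
    (a : V) (ha : a ∈ T) (he : ({v,a} : Finset V) ∈ K.edges)
    (hcard : T.card < 6) : False := by
  have := Finset.card_le_card (link_closure hK v T hcl a ha he)
  rw [Nb_card hd] at this; omega

lemma card_le3 (a b c : V) : ({a,b,c} : Finset V).card ≤ 3 := by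
  have h1 := Finset.card_insert_le a ({b,c} : Finset V)
  have h2 := Finset.card_insert_le b ({c} : Finset V)
  simp at h2; omega

lemma card_le4 (a b c d : V) : ({a,b,c,d} : Finset V).card ≤ 4 := by
  have h1 := Finset.card_insert_le a ({b,c,d} : Finset V)
  have h2 := card_le3 b c d; omega

lemma card_le5 (a b c d e : V) : ({a,b,c,d,e} : Finset V).card ≤ 5 := by
  have h1 := Finset.card_insert_le a ({b,c,d,e} : Finset V)
  have h2 := card_le4 b c d e; omega

lemma card6 {a b c d e f : V} (h1 : a ≠ b) (h2 : a ≠ c) (h3 : a ≠ d) (h4 : a ≠ e)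
    (h5 : a ≠ f) (h6 : b ≠ c) (h7 : b ≠ d) (h8 : b ≠ e) (h9 : b ≠ f) (h10 : c ≠ d)
    (h11 : c ≠ e) (h12 : c ≠ f) (h13 : d ≠ e) (h14 : d ≠ f) (h15 : e ≠ f) :
    ({a,b,c,d,e,f} : Finset V).card = 6 := by
  rw [Finset.card_insert_of_notMem (by simp [h1,h2,h3,h4,h5]),
     Finset.card_insert_of_notMem (by simp [h6,h7,h8,h9]),
     Finset.card_insert_of_notMem (by simp [h10,h11,h12]),
     Finset.card_insert_of_notMem (by simp [h13,h14]),
     Finset.card_insert_of_notMem (by simp [h15]), Finset.card_singleton]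


/-- the link of `u` is the 6-cycle `c1 c2 c3 c4 c5 c6` -/
def Cyc (K : SComplex V) (u c1 c2 c3 c4 c5 c6 : V) : Prop :=
  (u ≠ c1 ∧ u ≠ c2 ∧ u ≠ c3 ∧ u ≠ c4 ∧ u ≠ c5 ∧ u ≠ c6) ∧
  (c1 ≠ c2 ∧ c1 ≠ c3 ∧ c1 ≠ c4 ∧ c1 ≠ c5 ∧ c1 ≠ c6 ∧ c2 ≠ c3 ∧ c2 ≠ c4 ∧ c2 ≠ c5 ∧
    c2 ≠ c6 ∧ c3 ≠ c4 ∧ c3 ≠ c5 ∧ c3 ≠ c6 ∧ c4 ≠ c5 ∧ c4 ≠ c6 ∧ c5 ≠ c6) ∧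
  (({u,c1,c2} : Finset V) ∈ K.faces ∧ ({u,c2,c3} : Finset V) ∈ K.faces ∧
    ({u,c3,c4} : Finset V) ∈ K.faces ∧ ({u,c4,c5} : Finset V) ∈ K.faces ∧
    ({u,c5,c6} : Finset V) ∈ K.faces ∧ ({u,c6,c1} : Finset V) ∈ K.faces) ∧
  (∀ x, ({u,x} : Finset V) ∈ K.edges →
    x = c1 ∨ x = c2 ∨ x = c3 ∨ x = c4 ∨ x = c5 ∨ x = c6)

lemma cyc_rot {u c1 c2 c3 c4 c5 c6 : V} (h : Cyc K u c1 c2 c3 c4 c5 c6) :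
    Cyc K u c2 c3 c4 c5 c6 c1 := by
  obtain ⟨⟨h1,h2,h3,h4,h5,h6⟩,
    ⟨d12,d13,d14,d15,d16,d23,d24,d25,d26,d34,d35,d36,d45,d46,d56⟩, ⟨f1,f2,f3,f4,f5,f6⟩, hnb⟩ := h
  exact ⟨⟨h2,h3,h4,h5,h6,h1⟩,
    ⟨d23,d24,d25,d26,d12.symm,d34,d35,d36,d13.symm,d45,d46,d14.symm,d56,d15.symm,d16.symm⟩,
    ⟨f2,f3,f4,f5,f6,f1⟩, fun x hx => by rcases hnb x hx with h|h|h|h|h|h <;> tauto⟩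

lemma cyc_refl {u c1 c2 c3 c4 c5 c6 : V} (h : Cyc K u c1 c2 c3 c4 c5 c6) :
    Cyc K u c1 c6 c5 c4 c3 c2 := by
  obtain ⟨⟨h1,h2,h3,h4,h5,h6⟩,
    ⟨d12,d13,d14,d15,d16,d23,d24,d25,d26,d34,d35,d36,d45,d46,d56⟩, ⟨f1,f2,f3,f4,f5,f6⟩, hnb⟩ := h
  exact ⟨⟨h1,h6,h5,h4,h3,h2⟩,
    ⟨d16,d15,d14,d13,d12,d56.symm,d46.symm,d36.symm,d26.symm,d45.symm,d35.symm,d25.symm,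
      d34.symm,d24.symm,d23.symm⟩,
    ⟨t23 u c6 c1 ▸ f6, t23 u c5 c6 ▸ f5, t23 u c4 c5 ▸ f4, t23 u c3 c4 ▸ f3,
      t23 u c2 c3 ▸ f2, t23 u c1 c2 ▸ f1⟩,
    fun x hx => by rcases hnb x hx with h|h|h|h|h|h <;> tauto⟩

/-- completions of the edge u-c1 in a cycle -/
lemma cyc_compl (hK : K.IsClosedSurface) {u c1 c2 c3 c4 c5 c6 : V}
    (h : Cyc K u c1 c2 c3 c4 c5 c6) :
    ∀ y, ({u,c1,y} : Finset V) ∈ K.faces → y = c2 ∨ y = c6 := by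
  obtain ⟨⟨h1,h2,h3,h4,h5,h6⟩,
    ⟨d12,d13,d14,d15,d16,d23,d24,d25,d26,d34,d35,d36,d45,d46,d56⟩, ⟨f1,f2,f3,f4,f5,f6⟩, hnb⟩ := h
  exact completions_determined hK d26 f1 (t23 u c6 c1 ▸ f6)

lemma cyc_edge (hK : K.IsClosedSurface) {u c1 c2 c3 c4 c5 c6 : V}
    (h : Cyc K u c1 c2 c3 c4 c5 c6) : ({u,c1} : Finset V) ∈ K.edges :=
  edge_of_face h.2.2.1.1 h.1.1

set_option maxHeartbeats 1000000 in
/-- the second face over a link edge has its apex in the link, two steps away -/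
lemma second_face (hK : K.IsClosedSurface) (hd : ∀ v : V, K.degree v = 6)
    {u c1 c2 c3 c4 c5 c6 : V} (h : Cyc K u c1 c2 c3 c4 c5 c6)
    (H : ∀ a b v : V, ({u,a,b} : Finset V) ∈ K.faces → ({v,a,b} : Finset V) ∈ K.faces →
      u ≠ v → ({u,v} : Finset V) ∈ K.edges)
    {y : V} (hy : ({c1,c2,y} : Finset V) ∈ K.faces) (hyu : y ≠ u) :
    y = c4 ∨ y = c5 := by
  obtain ⟨⟨h1,h2,h3,h4,h5,h6⟩,
    ⟨d12,d13,d14,d15,d16,d23,d24,d25,d26,d34,d35,d36,d45,d46,d56⟩, ⟨f1,f2,f3,f4,f5,f6⟩, hnb⟩ := h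
  have hyN : y = c1 ∨ y = c2 ∨ y = c3 ∨ y = c4 ∨ y = c5 ∨ y = c6 := by
    apply hnb
    exact H c1 c2 y f1 (trot' c1 c2 y ▸ hy) hyu.symm
  have hne := face_ne hy
  have hy1 : y ≠ c1 := hne.2.1.symm
  have hy2 : y ≠ c2 := hne.2.2.symm
  have hy3 : y ≠ c3 := by
    intro hEq
    rw [hEq] at hy
    refine closed_contra hK hd c2 {u,c1,c3} ?_ u (by simp) ?_ ?_
    · intro x hx z hz
      simp only [Finset.mem_insert, Finset.mem_singleton] at hx ⊢
      rcases hx with h|h|h <;> rw [h] at hz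
      · rw [t12] at hz
        rcases completions_determined hK d13 (t23 u c1 c2 ▸ f1) f2 z hz with rfl|rfl <;> simp
      · rw [t12] at hz
        rcases completions_determined hK h3 (trot u c1 c2 ▸ f1) hy z hz with rfl|rfl <;> simp
      · rcases completions_determined hK h1 (trot u c2 c3 ▸ f2) (trot c1 c2 c3 ▸ hy)
          z hz with rfl|rfl <;> simp
    · exact edge_comm (edge_of_face (t23 u c1 c2 ▸ f1) h2)
    · have := card_le3 u c1 c3; omega
  have hy6 : y ≠ c6 := by
    intro hEq
    rw [hEq] at hy
    have e1 : ({u,c1,c6} : Finset V) ∈ K.faces := t23 u c6 c1 ▸ f6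
    have e2 : ({c1,c2,u} : Finset V) ∈ K.faces := trot u c1 c2 ▸ f1
    have e3 : ({c1,c6,u} : Finset V) ∈ K.faces := t13 u c6 c1 ▸ f6
    have e4 : ({c1,c6,c2} : Finset V) ∈ K.faces := t23 c1 c2 c6 ▸ hy
    refine closed_contra hK hd c1 {u,c2,c6} ?_ u (by simp) ?_ ?_
    · intro x hx z hz
      simp only [Finset.mem_insert, Finset.mem_singleton] at hx ⊢
      rcases hx with h|h|h <;> rw [h] at hz
      · rw [t12] at hz
        rcases completions_determined hK d26 f1 e1 z hz with rfl|rfl <;> simp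
      · rcases completions_determined hK h6 e2 hy z hz with rfl|rfl <;> simp
      · rcases completions_determined hK h2 e3 e4 z hz with rfl|rfl <;> simp
    · exact edge_comm (edge_of_face f1 h1)
    · have := card_le3 u c2 c6; omega
  tauto


set_option maxHeartbeats 1000000 in
lemma exists_cyc (hK : K.IsClosedSurface) (hd : ∀ v : V, K.degree v = 6) (u : V) :
    ∃ c1 c2 c3 c4 c5 c6, Cyc K u c1 c2 c3 c4 c5 c6 := by
  have hNcard := Nb_card hd u
  have hNne : (Nb K u).Nonempty := by rw [← Finset.card_pos, hNcard]; omega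
  obtain ⟨c1, hc1m⟩ := hNne
  rw [mem_Nb] at hc1m
  have h1 : u ≠ c1 := edge_ne hc1m
  obtain ⟨c2, c6, d26, hc2u, hc2c1, hc6u, hc6c1, f1, f6', hall1⟩ := two_completions hK hc1m
  have h2 : u ≠ c2 := hc2u.symm
  have h6 : u ≠ c6 := hc6u.symm
  have f1' : ({u,c2,c1} : Finset V) ∈ K.faces := t23 u c1 c2 ▸ f1
  obtain ⟨c3, hc3c1, hc3u, hc3c2, f2', hall2⟩ := other_completion hK f1'
  have f2 : ({u,c2,c3} : Finset V) ∈ K.faces := f2'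
  have h3 : u ≠ c3 := hc3u.symm
  have e2 : ({u,c2} : Finset V) ∈ K.edges := edge_of_face f1' h2
  have e6 : ({u,c6} : Finset V) ∈ K.edges := edge_of_face (t23 u c1 c6 ▸ f6') h6
  have f6 : ({u,c6,c1} : Finset V) ∈ K.faces := t23 u c1 c6 ▸ f6'
  -- c3 ≠ c6
  have hc3c6 : c3 ≠ c6 := by
    intro hEq
    rw [hEq] at f2 hall2
    have e61 : ({u,c6,c2} : Finset V) ∈ K.faces := t23 u c2 c6 ▸ f2
    refine closed_contra hK hd u {c1,c2,c6} ?_ c1 (by simp) hc1m ?_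
    · intro x hx z hz
      simp only [Finset.mem_insert, Finset.mem_singleton] at hx ⊢
      rcases hx with h|h|h <;> rw [h] at hz
      · rcases hall1 z hz with rfl|rfl <;> simp
      · rcases hall2 z hz with rfl|rfl <;> simp
      · rcases completions_determined hK hc2c1.symm f6 e61 z hz with rfl|rfl <;> simp
    · have := card_le3 c1 c2 c6; omega
  -- c4
  have f2'' : ({u,c3,c2} : Finset V) ∈ K.faces := t23 u c2 c3 ▸ f2
  obtain ⟨c4, hc4c2, hc4u, hc4c3, f3, hall3⟩ := other_completion hK f2''
  have h4 : u ≠ c4 := hc4u.symm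
  have hc4c1 : c4 ≠ c1 := by
    intro hEq
    rw [hEq] at f3
    rcases hall1 c3 (t23 u c3 c1 ▸ f3) with h|h
    · exact hc3c2 h
    · exact hc3c6 h
  have hc4c6 : c4 ≠ c6 := by
    intro hEq
    rw [hEq] at f3 hall3
    have e61 : ({u,c6,c3} : Finset V) ∈ K.faces := t23 u c3 c6 ▸ f3
    refine closed_contra hK hd u {c1,c2,c3,c6} ?_ c1 (by simp) hc1m ?_
    · intro x hx z hz
      simp only [Finset.mem_insert, Finset.mem_singleton] at hx ⊢
      rcases hx with h|h|h|h <;> rw [h] at hz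
      · rcases hall1 z hz with rfl|rfl <;> simp
      · rcases hall2 z hz with rfl|rfl <;> simp
      · rcases hall3 z hz with rfl|rfl <;> simp
      · rcases completions_determined hK hc3c1.symm f6 e61 z hz with rfl|rfl <;> simp
    · have := card_le4 c1 c2 c3 c6; omega
  -- c5
  have f3'' : ({u,c4,c3} : Finset V) ∈ K.faces := t23 u c3 c4 ▸ f3
  obtain ⟨c5, hc5c3, hc5u, hc5c4, f4, hall4⟩ := other_completion hK f3''
  have h5 : u ≠ c5 := hc5u.symm
  have hc5c1 : c5 ≠ c1 := by
    intro hEq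
    rw [hEq] at f4
    rcases hall1 c4 (t23 u c4 c1 ▸ f4) with h|h
    · exact hc4c2 h
    · exact hc4c6 h
  have hc5c2 : c5 ≠ c2 := by
    intro hEq
    rw [hEq] at f4
    rcases hall2 c4 (t23 u c4 c2 ▸ f4) with h|h
    · exact hc4c1 h
    · exact hc4c3 h
  have hc5c6 : c5 ≠ c6 := by
    intro hEq
    rw [hEq] at f4 hall4
    have e61 : ({u,c6,c4} : Finset V) ∈ K.faces := t23 u c4 c6 ▸ f4
    refine closed_contra hK hd u {c1,c2,c3,c4,c6} ?_ c1 (by simp) hc1m ?_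
    · intro x hx z hz
      simp only [Finset.mem_insert, Finset.mem_singleton] at hx ⊢
      rcases hx with h|h|h|h|h <;> rw [h] at hz
      · rcases hall1 z hz with rfl|rfl <;> simp
      · rcases hall2 z hz with rfl|rfl <;> simp
      · rcases hall3 z hz with rfl|rfl <;> simp
      · rcases hall4 z hz with rfl|rfl <;> simp
      · rcases completions_determined hK hc4c1.symm f6 e61 z hz with rfl|rfl <;> simp
    · have := card_le5 c1 c2 c3 c4 c6; omega
  -- the sixth
  have f4'' : ({u,c5,c4} : Finset V) ∈ K.faces := t23 u c4 c5 ▸ f4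
  obtain ⟨t, htc4, htu, htc5, f5t, hall5⟩ := other_completion hK f4''
  have htc1 : t ≠ c1 := by
    intro hEq
    rw [hEq] at f5t
    rcases hall1 c5 (t23 u c5 c1 ▸ f5t) with h|h
    · exact hc5c2 h
    · exact hc5c6 h
  have htc2 : t ≠ c2 := by
    intro hEq
    rw [hEq] at f5t
    rcases hall2 c5 (t23 u c5 c2 ▸ f5t) with h|h
    · exact hc5c1 h
    · exact hc5c3 h
  have htc3 : t ≠ c3 := by
    intro hEq
    rw [hEq] at f5t
    rcases hall3 c5 (t23 u c5 c3 ▸ f5t) with h|h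
    · exact hc5c2 h
    · exact hc5c4 h
  -- Nb u is exactly the six
  have e3 : ({u,c3} : Finset V) ∈ K.edges := edge_of_face f2'' h3
  have e4 : ({u,c4} : Finset V) ∈ K.edges := edge_of_face f3'' h4
  have e5 : ({u,c5} : Finset V) ∈ K.edges := edge_of_face f4'' h5
  have hNb : Nb K u = {c1,c2,c3,c4,c5,c6} := by
    apply Nb_eq hd
    · intro x hx
      simp only [Finset.mem_insert, Finset.mem_singleton] at hx
      rw [mem_Nb]
      rcases hx with h|h|h|h|h|h <;> rw [h]
      · exact hc1m
      · exact e2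
      · exact e3
      · exact e4
      · exact e5
      · exact e6
    · exact card6 hc2c1.symm hc3c1.symm hc4c1.symm hc5c1.symm hc6c1.symm
        hc3c2.symm hc4c2.symm hc5c2.symm d26
        hc4c3.symm hc5c3.symm hc3c6 hc5c4.symm hc4c6 hc5c6
  have htmem : t = c6 := by
    have : t ∈ Nb K u := by
      rw [mem_Nb]
      exact edge_of_face (t23 u c5 t ▸ f5t) htu.symm
    rw [hNb] at this
    simp only [Finset.mem_insert, Finset.mem_singleton] at this
    tauto
  rw [htmem] at f5t
  refine ⟨c1, c2, c3, c4, c5, c6, ⟨h1,h2,h3,h4,h5,h6⟩,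
    ⟨hc2c1.symm, hc3c1.symm, hc4c1.symm, hc5c1.symm, hc6c1.symm, hc3c2.symm, hc4c2.symm,
      hc5c2.symm, d26, hc4c3.symm, hc5c3.symm, hc3c6, hc5c4.symm,
      hc4c6, hc5c6⟩,
    ⟨f1, f2, f3, f4, f5t, f6⟩, ?_⟩
  intro x hx
  have : x ∈ Nb K u := by rw [mem_Nb]; exact hx
  rw [hNb] at this
  simp only [Finset.mem_insert, Finset.mem_singleton] at this
  exact this


set_option maxHeartbeats 2000000 in
/-- If the second face over c1c2 is c1c2c4, then all neighbours of c1 lie in the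
closed star of u. -/
lemma L2 (hK : K.IsClosedSurface) (hd : ∀ v : V, K.degree v = 6)
    {u c1 c2 c3 c4 c5 c6 : V} (h : Cyc K u c1 c2 c3 c4 c5 c6)
    (H : ∀ a b v : V, ({u,a,b} : Finset V) ∈ K.faces → ({v,a,b} : Finset V) ∈ K.faces →
      u ≠ v → ({u,v} : Finset V) ∈ K.edges)
    (hf124 : ({c1,c2,c4} : Finset V) ∈ K.faces) :
    Nb K c1 ⊆ ({u,c1,c2,c3,c4,c5,c6} : Finset V) := by
  have r1 := cyc_rot h
  have r2 := cyc_rot r1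
  have r3 := cyc_rot r2
  have r4 := cyc_rot r3
  have r5 := cyc_rot r4
  obtain ⟨⟨h1,h2,h3,h4,h5,h6⟩,
    ⟨d12,d13,d14,d15,d16,d23,d24,d25,d26,d34,d35,d36,d45,d46,d56⟩, ⟨f1,f2,f3,f4,f5,f6⟩, hnb⟩ := h
  have hallU1 : ∀ y, ({u,c1,y} : Finset V) ∈ K.faces → y = c2 ∨ y = c6 :=
    completions_determined hK d26 f1 (t23 u c6 c1 ▸ f6)
  have hallU2 : ∀ y, ({u,c2,y} : Finset V) ∈ K.faces → y = c1 ∨ y = c3 :=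
    completions_determined hK d13 (t23 u c1 c2 ▸ f1) f2
  have hallU3 : ∀ y, ({u,c3,y} : Finset V) ∈ K.faces → y = c2 ∨ y = c4 :=
    completions_determined hK d24 (t23 u c2 c3 ▸ f2) f3
  have hallU4 : ∀ y, ({u,c4,y} : Finset V) ∈ K.faces → y = c3 ∨ y = c5 :=
    completions_determined hK d35 (t23 u c3 c4 ▸ f3) f4
  have hallU5 : ∀ y, ({u,c5,y} : Finset V) ∈ K.faces → y = c4 ∨ y = c6 :=
    completions_determined hK d46 (t23 u c4 c5 ▸ f4) f5
  have hallU6 : ∀ y, ({u,c6,y} : Finset V) ∈ K.faces → y = c5 ∨ y = c1 :=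
    completions_determined hK (fun hh => d15 hh.symm) (t23 u c5 c6 ▸ f5) f6
  have hallE1 : ∀ y, ({c1,c2,y} : Finset V) ∈ K.faces → y = u ∨ y = c4 :=
    completions_determined hK h4 (trot u c1 c2 ▸ f1) hf124
  obtain ⟨x2, hx2u, hx2c2, hx2c3, fx2, hallE2⟩ := other_completion hK (trot u c2 c3 ▸ f2)
  obtain ⟨x3, hx3u, hx3c3, hx3c4, fx3, hallE3⟩ := other_completion hK (trot u c3 c4 ▸ f3)
  obtain ⟨x4, hx4u, hx4c4, hx4c5, fx4, hallE4⟩ := other_completion hK (trot u c4 c5 ▸ f4)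
  obtain ⟨x5, hx5u, hx5c5, hx5c6, fx5, hallE5⟩ := other_completion hK (trot u c5 c6 ▸ f5)
  obtain ⟨x6, hx6u, hx6c6, hx6c1, fx6, hallE6⟩ := other_completion hK (trot u c6 c1 ▸ f6)
  have hx2mem : x2 = c5 ∨ x2 = c6 := second_face hK hd r1 H fx2 hx2u
  have hx3mem : x3 = c6 ∨ x3 = c1 := second_face hK hd r2 H fx3 hx3u
  have hx4mem : x4 = c1 ∨ x4 = c2 := second_face hK hd r3 H fx4 hx4u
  have hx5mem : x5 = c2 ∨ x5 = c3 := second_face hK hd r4 H fx5 hx5u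
  have hx6mem : x6 = c3 ∨ x6 = c4 := second_face hK hd r5 H fx6 hx6u
  -- x6 = c3
  have hx6 : x6 = c3 := by
    rcases hx6mem with hEq | hEq
    · exact hEq
    exfalso
    rw [hEq] at fx6
    refine closed_contra hK hd c1 {u,c2,c4,c6} ?_ u (by simp) ?_ ?_
    · intro x hx z hz
      simp only [Finset.mem_insert, Finset.mem_singleton] at hx ⊢
      rcases hx with hh|hh|hh|hh <;> rw [hh] at hz
      · rw [t12] at hz
        rcases hallU1 z hz with rfl|rfl <;> simp
      · rcases hallE1 z hz with rfl|rfl <;> simp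
      · rcases completions_determined hK d26 (t23 c1 c2 c4 ▸ hf124)
          (trot c6 c1 c4 ▸ fx6) z hz with rfl|rfl <;> simp
      · rw [t12] at hz
        rcases hallE6 z hz with rfl|rfl
        · simp
        · rw [hEq]; simp
    · exact edge_comm (edge_of_face f1 h1)
    · have := card_le4 u c2 c4 c6; omega
  rw [hx6] at fx6 hallE6
  -- neighbours of c1
  have ec1u : ({c1,u} : Finset V) ∈ K.edges := edge_comm (edge_of_face f1 h1)
  have ec1c2 : ({c1,c2} : Finset V) ∈ K.edges := edge_of_face (trot u c1 c2 ▸ f1) d12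
  have ec1c3 : ({c1,c3} : Finset V) ∈ K.edges := edge_of_face (trot c6 c1 c3 ▸ fx6) d13
  have ec1c4 : ({c1,c4} : Finset V) ∈ K.edges := edge_of_face (t23 c1 c2 c4 ▸ hf124) d14
  have ec1c6 : ({c1,c6} : Finset V) ∈ K.edges := edge_of_face (t13 u c6 c1 ▸ f6) d16
  have hns : ¬ Nb K c1 ⊆ ({u,c2,c3,c4,c6} : Finset V) := by
    intro hsub
    have hcard := Finset.card_le_card hsub
    rw [Nb_card hd] at hcard
    have := card_le5 u c2 c3 c4 c6
    omega
  obtain ⟨w, hwN, hwns⟩ := Finset.not_subset.1 hns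
  have ew : ({c1,w} : Finset V) ∈ K.edges := mem_Nb.1 hwN
  simp only [Finset.mem_insert, Finset.mem_singleton, not_or] at hwns
  obtain ⟨hwu, hw2, hw3, hw4, hw6⟩ := hwns
  have hw1 : w ≠ c1 := (edge_ne ew).symm
  have hNb1 : Nb K c1 = {u,c2,c3,c4,c6,w} := by
    apply Nb_eq hd
    · intro x hx
      simp only [Finset.mem_insert, Finset.mem_singleton] at hx
      rw [mem_Nb]
      rcases hx with hh|hh|hh|hh|hh|hh <;> rw [hh]
      · exact ec1u
      · exact ec1c2
      · exact ec1c3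
      · exact ec1c4
      · exact ec1c6
      · exact ew
    · exact card6 h2 h3 h4 h6 (fun hh => hwu hh.symm) d23 d24 d26 (fun hh => hw2 hh.symm)
        d34 d36 (fun hh => hw3 hh.symm) d46 (fun hh => hw4 hh.symm) (fun hh => hw6 hh.symm)
  -- the two faces over the edge c1-w
  obtain ⟨p, q, hpq, hpc1, hpw, hqc1, hqw, fp, fq, hallW0⟩ := two_completions hK ew
  have hpq34 : ∀ r, r ≠ c1 → r ≠ w → ({c1,w,r} : Finset V) ∈ K.faces → r = c3 ∨ r = c4 := by
    intro r hrc1 hrw hfr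
    have hrN : r ∈ Nb K c1 := mem_Nb.2 (edge_of_face (t23 c1 w r ▸ hfr) hrc1.symm)
    rw [hNb1] at hrN
    simp only [Finset.mem_insert, Finset.mem_singleton] at hrN
    rcases hrN with hh|hh|hh|hh|hh|hh
    · exfalso
      rw [hh] at hfr
      rcases hallU1 w (trot' c1 w u ▸ hfr) with he|he
      · exact hw2 he
      · exact hw6 he
    · exfalso
      rw [hh] at hfr
      rcases hallE1 w (t23 c1 w c2 ▸ hfr) with he|he
      · exact hwu he
      · exact hw4 he
    · exact Or.inl hh
    · exact Or.inr hh
    · exfalso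
      rw [hh] at hfr
      rcases hallE6 w (trot' c1 w c6 ▸ hfr) with he|he
      · exact hwu he
      · exact hw3 he
    · exact (hrw hh).elim
  have hp34 := hpq34 p hpc1 hpw fp
  have hq34 := hpq34 q hqc1 hqw fq
  have hfw34 : ({c1,w,c3} : Finset V) ∈ K.faces ∧ ({c1,w,c4} : Finset V) ∈ K.faces := by
    rcases hp34 with hh|hh
    · rcases hq34 with hh2|hh2
      · exact absurd (hh.trans hh2.symm) hpq
      · rw [hh] at fp; rw [hh2] at fq; exact ⟨fp, fq⟩
    · rcases hq34 with hh2|hh2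
      · rw [hh] at fp; rw [hh2] at fq; exact ⟨fq, fp⟩
      · exact absurd (hh.trans hh2.symm) hpq
  obtain ⟨fw3, fw4⟩ := hfw34
  have hall13 : ∀ y, ({c1,c3,y} : Finset V) ∈ K.faces → y = c6 ∨ y = w :=
    completions_determined hK (fun hh => hw6 hh.symm) (trot c6 c1 c3 ▸ fx6) (t23 c1 w c3 ▸ fw3)
  have hall14 : ∀ y, ({c1,c4,y} : Finset V) ∈ K.faces → y = c2 ∨ y = w :=
    completions_determined hK (fun hh => hw2 hh.symm) (t23 c1 c2 c4 ▸ hf124) (t23 c1 w c4 ▸ fw4)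
  by_cases hw5 : w = c5
  · intro x hx
    rw [hNb1] at hx
    simp only [Finset.mem_insert, Finset.mem_singleton] at hx ⊢
    rw [hw5] at hx
    rcases hx with hh|hh|hh|hh|hh|hh <;> simp [hh]
  -- now suppose w is outside the closed star; derive a contradiction
  exfalso
  have hNb4 : Nb K c4 = {u,c1,c2,c3,c5,w} := by
    apply Nb_eq hd
    · intro x hx
      simp only [Finset.mem_insert, Finset.mem_singleton] at hx
      rw [mem_Nb]
      rcases hx with hh|hh|hh|hh|hh|hh <;> rw [hh]
      · exact edge_comm (edge_of_face (t23 u c3 c4 ▸ f3) h4)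
      · exact edge_of_face (trot' c1 c2 c4 ▸ hf124) d14.symm
      · exact edge_of_face (t13 c1 c2 c4 ▸ hf124) d24.symm
      · exact edge_of_face (t13 u c3 c4 ▸ f3) d34.symm
      · exact edge_of_face (trot u c4 c5 ▸ f4) d45
      · exact edge_of_face (t13 c1 w c4 ▸ fw4) (fun hh => hw4 hh.symm)
    · exact card6 h1 h2 h3 h5 (fun hh => hwu hh.symm) d12 d13 d15 (fun hh => hw1 hh.symm)
        d23 d25 (fun hh => hw2 hh.symm) d35 (fun hh => hw3 hh.symm) (fun hh => hw5 hh.symm)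
  -- second completion of the edge c4-w is c2
  obtain ⟨y4, hy4c1, hy4c4, hy4w, fy4, hall4w⟩ := other_completion hK (t13 c1 w c4 ▸ fw4)
  have hy4 : y4 = c2 := by
    have hy4N : y4 ∈ Nb K c4 := mem_Nb.2 (edge_of_face (t23 c4 w y4 ▸ fy4) hy4c4.symm)
    rw [hNb4] at hy4N
    simp only [Finset.mem_insert, Finset.mem_singleton] at hy4N
    rcases hy4N with hh|hh|hh|hh|hh|hh
    · exfalso
      rw [hh] at fy4
      rcases hallU4 w (trot' c4 w u ▸ fy4) with he|he
      · exact hw3 he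
      · exact hw5 he
    · exact (hy4c1 hh).elim
    · exact hh
    · exfalso
      rw [hh] at fy4
      have hf34w : ({c3,c4,w} : Finset V) ∈ K.faces := t23 c3 w c4 ▸ t13 c4 w c3 ▸ fy4
      rcases hallE3 w hf34w with he|he
      · exact hwu he
      · rcases hx3mem with hh3|hh3 <;> rw [hh3] at he
        · exact hw6 he
        · exact hw1 he
    · exfalso
      rw [hh] at fy4
      rcases hallE4 w (t23 c4 w c5 ▸ fy4) with he|he
      · exact hwu he
      · rcases hx4mem with hh4|hh4 <;> rw [hh4] at he
        · exact hw1 he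
        · exact hw2 he
    · exact (hy4w hh).elim
  rw [hy4] at fy4 hall4w
  -- x2 facts
  have hx2c1 : x2 ≠ c1 := by
    rcases hx2mem with hh|hh <;> rw [hh]
    · exact d15.symm
    · exact d16.symm
  have hx2c4 : x2 ≠ c4 := by
    rcases hx2mem with hh|hh <;> rw [hh]
    · exact d45.symm
    · exact d46.symm
  have hx2w : x2 ≠ w := by
    rcases hx2mem with hh|hh <;> rw [hh]
    · exact fun hh2 => hw5 hh2.symm
    · exact fun hh2 => hw6 hh2.symm
  have hNb2 : Nb K c2 = {u,c1,c3,c4,x2,w} := by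
    apply Nb_eq hd
    · intro x hx
      simp only [Finset.mem_insert, Finset.mem_singleton] at hx
      rw [mem_Nb]
      rcases hx with hh|hh|hh|hh|hh|hh <;> rw [hh]
      · exact edge_comm (edge_of_face (t23 u c1 c2 ▸ f1) h2)
      · exact edge_of_face (t13 u c1 c2 ▸ f1) d12.symm
      · exact edge_of_face (trot u c2 c3 ▸ f2) d23
      · exact edge_of_face (trot c1 c2 c4 ▸ hf124) d24
      · exact edge_of_face (t23 c2 c3 x2 ▸ fx2) hx2c2.symm
      · exact edge_of_face (t13 c4 w c2 ▸ fy4) (fun hh2 => hw2 hh2.symm)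
    · exact card6 h1 h3 h4 (fun hh => hx2u hh.symm) (fun hh => hwu hh.symm)
        d13 d14 hx2c1.symm (fun hh => hw1 hh.symm) d34 hx2c3.symm (fun hh => hw3 hh.symm)
        hx2c4.symm (fun hh => hw4 hh.symm) hx2w
  -- second completion of the edge c2-w is x2
  obtain ⟨z2, hz2c4, hz2c2, hz2w, fz2, hall2w⟩ := other_completion hK (t13 c4 w c2 ▸ fy4)
  have hz2 : z2 = x2 := by
    have hz2N : z2 ∈ Nb K c2 := mem_Nb.2 (edge_of_face (t23 c2 w z2 ▸ fz2) hz2c2.symm)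
    rw [hNb2] at hz2N
    simp only [Finset.mem_insert, Finset.mem_singleton] at hz2N
    rcases hz2N with hh|hh|hh|hh|hh|hh
    · exfalso
      rw [hh] at fz2
      rcases hallU2 w (trot' c2 w u ▸ fz2) with he|he
      · exact hw1 he
      · exact hw3 he
    · exfalso
      rw [hh] at fz2
      rcases hallE1 w (trot' c2 w c1 ▸ fz2) with he|he
      · exact hwu he
      · exact hw4 he
    · exfalso
      rw [hh] at fz2
      rcases hallE2 w (t23 c2 w c3 ▸ fz2) with he|he
      · exact hwu he
      · exact hx2w he.symm
    · exact (hz2c4 hh).elim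
    · exact hh
    · exact (hz2w hh).elim
  rw [hz2] at fz2
  -- neighbours of c3
  have hNb3 : Nb K c3 = {u,c1,c2,c4,c6,w} := by
    apply Nb_eq hd
    · intro x hx
      simp only [Finset.mem_insert, Finset.mem_singleton] at hx
      rw [mem_Nb]
      rcases hx with hh|hh|hh|hh|hh|hh <;> rw [hh]
      · exact edge_comm (edge_of_face (t23 u c2 c3 ▸ f2) h3)
      · exact edge_of_face (t13 c6 c1 c3 ▸ fx6) d13.symm
      · exact edge_of_face (t13 u c2 c3 ▸ f2) d23.symm
      · exact edge_of_face (trot u c3 c4 ▸ f3) d34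
      · exact edge_of_face (trot' c6 c1 c3 ▸ fx6) d36
      · exact edge_of_face (t13 c1 w c3 ▸ fw3) (fun hh2 => hw3 hh2.symm)
    · exact card6 h1 h2 h4 h6 (fun hh => hwu hh.symm) d12 d14 d16 (fun hh => hw1 hh.symm)
        d24 d26 (fun hh => hw2 hh.symm) d46 (fun hh => hw4 hh.symm) (fun hh => hw6 hh.symm)
  -- second completion of the edge c3-w is c6
  obtain ⟨s3, hs3c1, hs3c3, hs3w, fs3, hall3w⟩ := other_completion hK (t13 c1 w c3 ▸ fw3)
  have hs3 : s3 = c6 := by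
    have hs3N : s3 ∈ Nb K c3 := mem_Nb.2 (edge_of_face (t23 c3 w s3 ▸ fs3) hs3c3.symm)
    rw [hNb3] at hs3N
    simp only [Finset.mem_insert, Finset.mem_singleton] at hs3N
    rcases hs3N with hh|hh|hh|hh|hh|hh
    · exfalso
      rw [hh] at fs3
      rcases hallU3 w (trot' c3 w u ▸ fs3) with he|he
      · exact hw2 he
      · exact hw4 he
    · exact (hs3c1 hh).elim
    · exfalso
      rw [hh] at fs3
      rcases hallE2 w (trot' c3 w c2 ▸ fs3) with he|he
      · exact hwu he
      · exact hx2w he.symm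
    · exfalso
      rw [hh] at fs3
      rcases hallE3 w (t23 c3 w c4 ▸ fs3) with he|he
      · exact hwu he
      · rcases hx3mem with hh3|hh3 <;> rw [hh3] at he
        · exact hw6 he
        · exact hw1 he
    · exact hh
    · exact (hs3w hh).elim
  rw [hs3] at fs3
  have hall36 : ∀ y, ({c3,c6,y} : Finset V) ∈ K.faces → y = c1 ∨ y = w :=
    completions_determined hK (fun hh => hw1 hh.symm) (trot' c6 c1 c3 ▸ fx6) (t23 c3 w c6 ▸ fs3)
  -- x2 = c5
  have hx2 : x2 = c5 := by
    rcases hx2mem with hh | hh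
    · exact hh
    exfalso
    rw [hh] at fx2
    rcases hall36 c2 (trot c2 c3 c6 ▸ fx2) with he|he
    · exact d12 he.symm
    · exact hw2 he.symm
  rw [hx2] at fz2
  -- neighbours of w
  have hNbw : Nb K w = {c1,c2,c3,c4,c5,c6} := by
    apply Nb_eq hd
    · intro x hx
      simp only [Finset.mem_insert, Finset.mem_singleton] at hx
      rw [mem_Nb]
      rcases hx with hh|hh|hh|hh|hh|hh <;> rw [hh]
      · exact edge_of_face (t12 c1 w c3 ▸ fw3) hw1
      · exact edge_of_face (trot c4 w c2 ▸ fy4) hw2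
      · exact edge_of_face (trot c1 w c3 ▸ fw3) hw3
      · exact edge_of_face (trot c1 w c4 ▸ fw4) hw4
      · exact edge_of_face (trot c2 w c5 ▸ fz2) hw5
      · exact edge_of_face (trot c3 w c6 ▸ fs3) hw6
    · exact card6 d12 d13 d14 d15 d16 d23 d24 d25 d26 d34 d35 d36 d45 d46 d56
  -- second completion of the edge c6-w : contradiction
  obtain ⟨s6, hs6c3, hs6c6, hs6w, fs6, hall6w⟩ := other_completion hK (t13 c3 w c6 ▸ fs3)
  have hs6N : s6 ∈ Nb K w := mem_Nb.2 (edge_of_face (trot c6 w s6 ▸ fs6) (fun hh2 => hs6w hh2.symm))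
  rw [hNbw] at hs6N
  simp only [Finset.mem_insert, Finset.mem_singleton] at hs6N
  rcases hs6N with hh|hh|hh|hh|hh|hh
  · rw [hh] at fs6
    rcases hallE6 w (t23 c6 w c1 ▸ fs6) with he|he
    · exact hwu he
    · exact hw3 he
  · rw [hh] at fs6
    have : c6 ∈ Nb K c2 := mem_Nb.2 (edge_of_face (t23 c2 w c6 ▸ t13 c6 w c2 ▸ fs6) d26)
    rw [hNb2, hx2] at this
    simp only [Finset.mem_insert, Finset.mem_singleton] at this
    rcases this with he|he|he|he|he|he
    · exact h6 he.symm
    · exact d16 he.symm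
    · exact d36 he.symm
    · exact d46 he.symm
    · exact d56 he.symm
    · exact hw6 he.symm
  · exact hs6c3 hh
  · rw [hh] at fs6
    have : c6 ∈ Nb K c4 := mem_Nb.2 (edge_of_face (t23 c4 w c6 ▸ t13 c6 w c4 ▸ fs6) d46)
    rw [hNb4] at this
    simp only [Finset.mem_insert, Finset.mem_singleton] at this
    rcases this with he|he|he|he|he|he
    · exact h6 he.symm
    · exact d16 he.symm
    · exact d26 he.symm
    · exact d36 he.symm
    · exact d56 he.symm
    · exact hw6 he.symm
  · rw [hh] at fs6
    have hf56w : ({c5,c6,w} : Finset V) ∈ K.faces := t23 c5 w c6 ▸ t13 c6 w c5 ▸ fs6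
    rcases hallE5 w hf56w with he|he
    · exact hwu he
    · rcases hx5mem with hh5|hh5 <;> rw [hh5] at he
      · exact hw2 he
      · exact hw3 he
  · exact hs6c6 hh

set_option maxHeartbeats 2000000 in
/-- If the second face over c1c2 is c1c2c5, then all neighbours of c1 lie in the
closed star of u. -/
lemma L3 (hK : K.IsClosedSurface) (hd : ∀ v : V, K.degree v = 6)
    {u c1 c2 c3 c4 c5 c6 : V} (h : Cyc K u c1 c2 c3 c4 c5 c6)
    (H : ∀ a b v : V, ({u,a,b} : Finset V) ∈ K.faces → ({v,a,b} : Finset V) ∈ K.faces →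
      u ≠ v → ({u,v} : Finset V) ∈ K.edges)
    (hf125 : ({c1,c2,c5} : Finset V) ∈ K.faces) :
    Nb K c1 ⊆ ({u,c1,c2,c3,c4,c5,c6} : Finset V) := by
  have r1 := cyc_rot h
  have r2 := cyc_rot r1
  have r3 := cyc_rot r2
  have r4 := cyc_rot r3
  have r5 := cyc_rot r4
  obtain ⟨⟨h1,h2,h3,h4,h5,h6⟩,
    ⟨d12,d13,d14,d15,d16,d23,d24,d25,d26,d34,d35,d36,d45,d46,d56⟩, ⟨f1,f2,f3,f4,f5,f6⟩, hnb⟩ := h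
  have hallU1 : ∀ y, ({u,c1,y} : Finset V) ∈ K.faces → y = c2 ∨ y = c6 :=
    completions_determined hK d26 f1 (t23 u c6 c1 ▸ f6)
  have hallU2 : ∀ y, ({u,c2,y} : Finset V) ∈ K.faces → y = c1 ∨ y = c3 :=
    completions_determined hK d13 (t23 u c1 c2 ▸ f1) f2
  have hallU5 : ∀ y, ({u,c5,y} : Finset V) ∈ K.faces → y = c4 ∨ y = c6 :=
    completions_determined hK d46 (t23 u c4 c5 ▸ f4) f5
  have hallU6 : ∀ y, ({u,c6,y} : Finset V) ∈ K.faces → y = c5 ∨ y = c1 :=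
    completions_determined hK (fun hh => d15 hh.symm) (t23 u c5 c6 ▸ f5) f6
  have hallE1 : ∀ y, ({c1,c2,y} : Finset V) ∈ K.faces → y = u ∨ y = c5 :=
    completions_determined hK h5 (trot u c1 c2 ▸ f1) hf125
  obtain ⟨x2, hx2u, hx2c2, hx2c3, fx2, hallE2⟩ := other_completion hK (trot u c2 c3 ▸ f2)
  obtain ⟨x4, hx4u, hx4c4, hx4c5, fx4, hallE4⟩ := other_completion hK (trot u c4 c5 ▸ f4)
  obtain ⟨x5, hx5u, hx5c5, hx5c6, fx5, hallE5⟩ := other_completion hK (trot u c5 c6 ▸ f5)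
  obtain ⟨x6, hx6u, hx6c6, hx6c1, fx6, hallE6⟩ := other_completion hK (trot u c6 c1 ▸ f6)
  have hx2mem : x2 = c5 ∨ x2 = c6 := second_face hK hd r1 H fx2 hx2u
  have hx4mem : x4 = c1 ∨ x4 = c2 := second_face hK hd r3 H fx4 hx4u
  have hx5mem : x5 = c2 ∨ x5 = c3 := second_face hK hd r4 H fx5 hx5u
  have hx6mem : x6 = c3 ∨ x6 = c4 := second_face hK hd r5 H fx6 hx6u
  -- neighbours of c1
  have ec1u : ({c1,u} : Finset V) ∈ K.edges := edge_comm (edge_of_face f1 h1)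
  have ec1c2 : ({c1,c2} : Finset V) ∈ K.edges := edge_of_face (trot u c1 c2 ▸ f1) d12
  have ec1c5 : ({c1,c5} : Finset V) ∈ K.edges := edge_of_face (t23 c1 c2 c5 ▸ hf125) d15
  have ec1c6 : ({c1,c6} : Finset V) ∈ K.edges := edge_of_face (t13 u c6 c1 ▸ f6) d16
  have ec1x6 : ({c1,x6} : Finset V) ∈ K.edges :=
    edge_of_face (trot c6 c1 x6 ▸ fx6) hx6c1.symm
  have hx6ne : x6 ≠ u ∧ x6 ≠ c2 ∧ x6 ≠ c5 ∧ x6 ≠ c6 := by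
    rcases hx6mem with hh|hh <;> rw [hh]
    · exact ⟨h3.symm, d23.symm, d35, d36⟩
    · exact ⟨h4.symm, d24.symm, d45, d46⟩
  have hns : ¬ Nb K c1 ⊆ ({u,c2,c5,c6,x6} : Finset V) := by
    intro hsub
    have hcard := Finset.card_le_card hsub
    rw [Nb_card hd] at hcard
    have := card_le5 u c2 c5 c6 x6
    omega
  obtain ⟨w, hwN, hwns⟩ := Finset.not_subset.1 hns
  have ew : ({c1,w} : Finset V) ∈ K.edges := mem_Nb.1 hwN
  simp only [Finset.mem_insert, Finset.mem_singleton, not_or] at hwns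
  obtain ⟨hwu, hw2, hw5, hw6, hwx6⟩ := hwns
  have hw1 : w ≠ c1 := (edge_ne ew).symm
  have hNb1 : Nb K c1 = {u,c2,c5,c6,x6,w} := by
    apply Nb_eq hd
    · intro x hx
      simp only [Finset.mem_insert, Finset.mem_singleton] at hx
      rw [mem_Nb]
      rcases hx with hh|hh|hh|hh|hh|hh <;> rw [hh]
      · exact ec1u
      · exact ec1c2
      · exact ec1c5
      · exact ec1c6
      · exact ec1x6
      · exact ew
    · exact card6 h2 h5 h6 hx6ne.1.symm (fun hh => hwu hh.symm) d25 d26 hx6ne.2.1.symm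
        (fun hh => hw2 hh.symm) d56 hx6ne.2.2.1.symm (fun hh => hw5 hh.symm)
        hx6ne.2.2.2.symm (fun hh => hw6 hh.symm) (fun hh => hwx6 hh.symm)
  -- the two faces over the edge c1-w are c1-w-c5 and c1-w-x6
  obtain ⟨p, q, hpq, hpc1, hpw, hqc1, hqw, fp, fq, hallW0⟩ := two_completions hK ew
  have hpq5x : ∀ r, r ≠ c1 → r ≠ w → ({c1,w,r} : Finset V) ∈ K.faces → r = c5 ∨ r = x6 := by
    intro r hrc1 hrw hfr
    have hrN : r ∈ Nb K c1 := mem_Nb.2 (edge_of_face (t23 c1 w r ▸ hfr) hrc1.symm)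
    rw [hNb1] at hrN
    simp only [Finset.mem_insert, Finset.mem_singleton] at hrN
    rcases hrN with hh|hh|hh|hh|hh|hh
    · exfalso
      rw [hh] at hfr
      rcases hallU1 w (trot' c1 w u ▸ hfr) with he|he
      · exact hw2 he
      · exact hw6 he
    · exfalso
      rw [hh] at hfr
      rcases hallE1 w (t23 c1 w c2 ▸ hfr) with he|he
      · exact hwu he
      · exact hw5 he
    · exact Or.inl hh
    · exfalso
      rw [hh] at hfr
      rcases hallE6 w (trot' c1 w c6 ▸ hfr) with he|he
      · exact hwu he
      · exact hwx6 he
    · exact Or.inr hh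
    · exact (hrw hh).elim
  have hfw : ({c1,w,c5} : Finset V) ∈ K.faces ∧ ({c1,w,x6} : Finset V) ∈ K.faces := by
    rcases hpq5x p hpc1 hpw fp with hh|hh
    · rcases hpq5x q hqc1 hqw fq with hh2|hh2
      · exact absurd (hh.trans hh2.symm) hpq
      · rw [hh] at fp; rw [hh2] at fq; exact ⟨fp, fq⟩
    · rcases hpq5x q hqc1 hqw fq with hh2|hh2
      · rw [hh] at fp; rw [hh2] at fq; exact ⟨fq, fp⟩
      · exact absurd (hh.trans hh2.symm) hpq
  obtain ⟨fw5, fwx⟩ := hfw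
  have hall15 : ∀ y, ({c1,c5,y} : Finset V) ∈ K.faces → y = c2 ∨ y = w :=
    completions_determined hK (fun hh => hw2 hh.symm) (t23 c1 c2 c5 ▸ hf125) (t23 c1 w c5 ▸ fw5)
  by_cases hwS : w = c3 ∨ w = c4
  · intro x hx
    rw [hNb1] at hx
    simp only [Finset.mem_insert, Finset.mem_singleton] at hx ⊢
    rcases hx with hh|hh|hh|hh|hh|hh
    · simp [hh]
    · simp [hh]
    · simp [hh]
    · simp [hh]
    · rcases hx6mem with hh2|hh2 <;> simp [hh, hh2]
    · rcases hwS with hh2|hh2 <;> simp [hh, hh2]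
  push_neg at hwS
  obtain ⟨hw3, hw4⟩ := hwS
  exfalso
  -- neighbours of c5
  have hNb5 : Nb K c5 = {u,c1,c2,c4,c6,w} := by
    apply Nb_eq hd
    · intro x hx
      simp only [Finset.mem_insert, Finset.mem_singleton] at hx
      rw [mem_Nb]
      rcases hx with hh|hh|hh|hh|hh|hh <;> rw [hh]
      · exact edge_comm (edge_of_face (t23 u c4 c5 ▸ f4) h5)
      · exact edge_of_face (trot' c1 c2 c5 ▸ hf125) d15.symm
      · exact edge_of_face (t13 c1 c2 c5 ▸ hf125) d25.symm
      · exact edge_of_face (t13 u c4 c5 ▸ f4) d45.symm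
      · exact edge_of_face (trot u c5 c6 ▸ f5) d56
      · exact edge_of_face (t13 c1 w c5 ▸ fw5) (fun hh2 => hw5 hh2.symm)
    · exact card6 h1 h2 h4 h6 (fun hh => hwu hh.symm) d12 d14 d16 (fun hh => hw1 hh.symm)
        d24 d26 (fun hh => hw2 hh.symm) d46 (fun hh => hw4 hh.symm) (fun hh => hw6 hh.symm)
  -- second completion of the edge c5-w is c2
  obtain ⟨y5, hy5c1, hy5c5, hy5w, fy5, hall5w⟩ := other_completion hK (t13 c1 w c5 ▸ fw5)
  have hy5 : y5 = c2 := by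
    have hy5N : y5 ∈ Nb K c5 := mem_Nb.2 (edge_of_face (t23 c5 w y5 ▸ fy5) hy5c5.symm)
    rw [hNb5] at hy5N
    simp only [Finset.mem_insert, Finset.mem_singleton] at hy5N
    rcases hy5N with hh|hh|hh|hh|hh|hh
    · exfalso
      rw [hh] at fy5
      rcases hallU5 w (trot' c5 w u ▸ fy5) with he|he
      · exact hw4 he
      · exact hw6 he
    · exact (hy5c1 hh).elim
    · exact hh
    · exfalso
      rw [hh] at fy5
      have hf45w : ({c4,c5,w} : Finset V) ∈ K.faces := t23 c4 w c5 ▸ t13 c5 w c4 ▸ fy5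
      rcases hallE4 w hf45w with he|he
      · exact hwu he
      · rcases hx4mem with hh4|hh4 <;> rw [hh4] at he
        · exact hw1 he
        · exact hw2 he
    · exfalso
      rw [hh] at fy5
      rcases hallE5 w (t23 c5 w c6 ▸ fy5) with he|he
      · exact hwu he
      · rcases hx5mem with hh5|hh5 <;> rw [hh5] at he
        · exact hw2 he
        · exact hw3 he
    · exact (hy5w hh).elim
  rw [hy5] at fy5 hall5w
  -- x2 = c6
  have hx2 : x2 = c6 := by
    rcases hx2mem with hh | hh
    · exfalso
      rw [hh] at fx2
      have hall25 : ∀ y, ({c2,c5,y} : Finset V) ∈ K.faces → y = c1 ∨ y = w :=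
        completions_determined hK (fun hh2 => hw1 hh2.symm) (trot c1 c2 c5 ▸ hf125)
          (trot' c5 w c2 ▸ fy5)
      rcases hall25 c3 (t23 c2 c3 c5 ▸ fx2) with he|he
      · exact d13 he.symm
      · exact hw3 he.symm
    · exact hh
  rw [hx2] at fx2 hallE2
  -- neighbours of c2
  have hNb2 : Nb K c2 = {u,c1,c3,c5,c6,w} := by
    apply Nb_eq hd
    · intro x hx
      simp only [Finset.mem_insert, Finset.mem_singleton] at hx
      rw [mem_Nb]
      rcases hx with hh|hh|hh|hh|hh|hh <;> rw [hh]
      · exact edge_comm (edge_of_face (t23 u c1 c2 ▸ f1) h2)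
      · exact edge_of_face (t13 u c1 c2 ▸ f1) d12.symm
      · exact edge_of_face (trot u c2 c3 ▸ f2) d23
      · exact edge_of_face (trot c1 c2 c5 ▸ hf125) d25
      · exact edge_of_face (t23 c2 c3 c6 ▸ fx2) d26
      · exact edge_of_face (t13 c5 w c2 ▸ fy5) (fun hh2 => hw2 hh2.symm)
    · exact card6 h1 h3 h5 h6 (fun hh => hwu hh.symm) d13 d15 d16 (fun hh => hw1 hh.symm)
        d35 d36 (fun hh => hw3 hh.symm) d56 (fun hh => hw5 hh.symm) (fun hh => hw6 hh.symm)
  -- second completion of the edge c2-w is c6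
  obtain ⟨z2, hz2c5, hz2c2, hz2w, fz2, hall2w⟩ := other_completion hK (t13 c5 w c2 ▸ fy5)
  have hz2 : z2 = c6 := by
    have hz2N : z2 ∈ Nb K c2 := mem_Nb.2 (edge_of_face (t23 c2 w z2 ▸ fz2) hz2c2.symm)
    rw [hNb2] at hz2N
    simp only [Finset.mem_insert, Finset.mem_singleton] at hz2N
    rcases hz2N with hh|hh|hh|hh|hh|hh
    · exfalso
      rw [hh] at fz2
      rcases hallU2 w (trot' c2 w u ▸ fz2) with he|he
      · exact hw1 he
      · exact hw3 he
    · exfalso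
      rw [hh] at fz2
      rcases hallE1 w (trot' c2 w c1 ▸ fz2) with he|he
      · exact hwu he
      · exact hw5 he
    · exfalso
      rw [hh] at fz2
      rcases hallE2 w (t23 c2 w c3 ▸ fz2) with he|he
      · exact hwu he
      · exact hw6 he
    · exact (hz2c5 hh).elim
    · exact hh
    · exact (hz2w hh).elim
  rw [hz2] at fz2
  -- neighbours of c6
  have hNb6 : Nb K c6 = {u,c1,c2,c3,c5,w} := by
    apply Nb_eq hd
    · intro x hx
      simp only [Finset.mem_insert, Finset.mem_singleton] at hx
      rw [mem_Nb]
      rcases hx with hh|hh|hh|hh|hh|hh <;> rw [hh]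
      · exact edge_comm (edge_of_face (t23 u c5 c6 ▸ f5) h6)
      · exact edge_of_face (trot u c6 c1 ▸ f6) d16.symm
      · exact edge_of_face (t23 c6 w c2 ▸ t13 c2 w c6 ▸ fz2) d26.symm
      · exact edge_of_face (t13 c2 c3 c6 ▸ fx2) d36.symm
      · exact edge_of_face (t13 u c5 c6 ▸ f5) d56.symm
      · exact edge_of_face (t13 c2 w c6 ▸ fz2) (fun hh2 => hw6 hh2.symm)
    · exact card6 h1 h2 h3 h5 (fun hh => hwu hh.symm) d12 d13 d15 (fun hh => hw1 hh.symm)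
        d23 d25 (fun hh => hw2 hh.symm) d35 (fun hh => hw3 hh.symm) (fun hh => hw5 hh.symm)
  -- x6 = c3
  have hx6 : x6 = c3 := by
    rcases hx6mem with hh | hh
    · exact hh
    exfalso
    have : x6 ∈ Nb K c6 := mem_Nb.2 (edge_of_face (t23 c6 c1 x6 ▸ fx6) hx6c6.symm)
    rw [hNb6, hh] at this
    simp only [Finset.mem_insert, Finset.mem_singleton] at this
    rcases this with he|he|he|he|he|he
    · exact h4 he.symm
    · exact d14 he.symm
    · exact d24 he.symm
    · exact d34 he.symm
    · exact d45 he
    · exact hw4 he.symm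
  rw [hx6] at fwx hallE6
  -- second completion of the edge c6-w is c3
  obtain ⟨s6, hs6c2, hs6c6, hs6w, fs6, hall6w⟩ := other_completion hK (t13 c2 w c6 ▸ fz2)
  have hs6 : s6 = c3 := by
    have hs6N : s6 ∈ Nb K c6 := mem_Nb.2 (edge_of_face (t23 c6 w s6 ▸ fs6) hs6c6.symm)
    rw [hNb6] at hs6N
    simp only [Finset.mem_insert, Finset.mem_singleton] at hs6N
    rcases hs6N with hh|hh|hh|hh|hh|hh
    · exfalso
      rw [hh] at fs6
      rcases hallU6 w (trot' c6 w u ▸ fs6) with he|he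
      · exact hw5 he
      · exact hw1 he
    · exfalso
      rw [hh] at fs6
      rcases hallE6 w (t23 c6 w c1 ▸ fs6) with he|he
      · exact hwu he
      · exact hw3 he
    · exact (hs6c2 hh).elim
    · exact hh
    · exfalso
      rw [hh] at fs6
      have hf56w : ({c5,c6,w} : Finset V) ∈ K.faces := t23 c5 w c6 ▸ t13 c6 w c5 ▸ fs6
      rcases hallE5 w hf56w with he|he
      · exact hwu he
      · rcases hx5mem with hh5|hh5 <;> rw [hh5] at he
        · exact hw2 he
        · exact hw3 he
    · exact (hs6w hh).elim
  rw [hs6] at fs6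
  -- neighbours of w and the final saturation contradiction
  have hnsw : ¬ Nb K w ⊆ ({c1,c2,c3,c5,c6} : Finset V) := by
    intro hsub
    have hcard := Finset.card_le_card hsub
    rw [Nb_card hd] at hcard
    have := card_le5 c1 c2 c3 c5 c6
    omega
  obtain ⟨t, htN, htns⟩ := Finset.not_subset.1 hnsw
  simp only [Finset.mem_insert, Finset.mem_singleton, not_or] at htns
  obtain ⟨ht1, ht2, ht3, ht5, ht6⟩ := htns
  have hNbw : Nb K w = {c1,c2,c3,c5,c6,t} := by
    apply Nb_eq hd
    · intro x hx
      simp only [Finset.mem_insert, Finset.mem_singleton] at hx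
      rw [mem_Nb]
      rcases hx with hh|hh|hh|hh|hh|hh <;> rw [hh]
      · exact edge_of_face (t12 c1 w c5 ▸ fw5) hw1
      · exact edge_of_face (trot c5 w c2 ▸ fy5) hw2
      · exact edge_of_face (trot c1 w c3 ▸ fwx) hw3
      · exact edge_of_face (trot c1 w c5 ▸ fw5) hw5
      · exact edge_of_face (trot c2 w c6 ▸ fz2) hw6
      · exact mem_Nb.1 htN
    · exact card6 d12 d13 d15 d16 (fun hh => ht1 hh.symm) d23 d25 d26
        (fun hh => ht2 hh.symm) d35 d36 (fun hh => ht3 hh.symm) d56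
        (fun hh => ht5 hh.symm) (fun hh => ht6 hh.symm)
  have ewt : ({w,t} : Finset V) ∈ K.edges := mem_Nb.1 htN
  obtain ⟨p', q', hpq', hp'w, hp't, hq'w, hq't, fp', fq', hallWT⟩ := two_completions hK ewt
  have hp'N : p' ∈ Nb K w := mem_Nb.2 (edge_of_face (t23 w t p' ▸ fp') hp'w.symm)
  rw [hNbw] at hp'N
  simp only [Finset.mem_insert, Finset.mem_singleton] at hp'N
  have hallWc1 : ∀ y, ({c1,w,y} : Finset V) ∈ K.faces → y = c5 ∨ y = c3 :=
    completions_determined hK d35.symm fw5 fwx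
  have hallWc2 : ∀ y, ({c2,w,y} : Finset V) ∈ K.faces → y = c5 ∨ y = c6 :=
    completions_determined hK d56 (t13 c5 w c2 ▸ fy5) fz2
  have hallWc3 : ∀ y, ({c3,w,y} : Finset V) ∈ K.faces → y = c1 ∨ y = c6 :=
    completions_determined hK d16 (t13 c1 w c3 ▸ fwx) (t13 c6 w c3 ▸ fs6)
  have hallWc5 : ∀ y, ({c5,w,y} : Finset V) ∈ K.faces → y = c1 ∨ y = c2 :=
    completions_determined hK d12 (t13 c1 w c5 ▸ fw5) fy5
  have hallWc6 : ∀ y, ({c6,w,y} : Finset V) ∈ K.faces → y = c2 ∨ y = c3 :=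
    completions_determined hK d23 (t13 c2 w c6 ▸ fz2) fs6
  rcases hp'N with hh|hh|hh|hh|hh|hh
  · rw [hh] at fp'
    rcases hallWc1 t (trot' w t c1 ▸ fp') with he|he
    · exact ht5 he
    · exact ht3 he
  · rw [hh] at fp'
    rcases hallWc2 t (trot' w t c2 ▸ fp') with he|he
    · exact ht5 he
    · exact ht6 he
  · rw [hh] at fp'
    rcases hallWc3 t (trot' w t c3 ▸ fp') with he|he
    · exact ht1 he
    · exact ht6 he
  · rw [hh] at fp'
    rcases hallWc5 t (trot' w t c5 ▸ fp') with he|he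
    · exact ht1 he
    · exact ht2 he
  · rw [hh] at fp'
    rcases hallWc6 t (trot' w t c6 ▸ fp') with he|he
    · exact ht2 he
    · exact ht3 he
  · exact hp't hh

lemma card_le6 (a b c d e f : V) : ({a,b,c,d,e,f} : Finset V).card ≤ 6 := by
  have h1 := Finset.card_insert_le a ({b,c,d,e,f} : Finset V)
  have h2 := card_le5 b c d e f; omega

lemma card_le7 (a b c d e f g : V) : ({a,b,c,d,e,f,g} : Finset V).card ≤ 7 := by
  have h1 := Finset.card_insert_le a ({b,c,d,e,f,g} : Finset V)
  have h2 := card_le6 b c d e f g; omega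

set_option maxHeartbeats 1000000 in
lemma pair_sub (hK : K.IsClosedSurface) (hd : ∀ v : V, K.degree v = 6)
    {u c1 c2 c3 c4 c5 c6 : V} (h : Cyc K u c1 c2 c3 c4 c5 c6)
    (H : ∀ a b v : V, ({u,a,b} : Finset V) ∈ K.faces → ({v,a,b} : Finset V) ∈ K.faces →
      u ≠ v → ({u,v} : Finset V) ∈ K.edges) :
    Nb K c1 ⊆ ({u,c1,c2,c3,c4,c5,c6} : Finset V) ∧
      Nb K c2 ⊆ ({u,c1,c2,c3,c4,c5,c6} : Finset V) := by
  have hrefl : Cyc K u c2 c1 c6 c5 c4 c3 :=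
    cyc_rot (cyc_rot (cyc_rot (cyc_rot (cyc_rot (cyc_refl h)))))
  have hseteq : ({u,c2,c1,c6,c5,c4,c3} : Finset V) = {u,c1,c2,c3,c4,c5,c6} := by
    ext x; simp; tauto
  obtain ⟨x1, hx1u, hx1c1, hx1c2, fx1, hallE1⟩ :=
    other_completion hK (trot u c1 c2 ▸ h.2.2.1.1)
  have hx1mem : x1 = c4 ∨ x1 = c5 := second_face hK hd h H fx1 hx1u
  rcases hx1mem with hh | hh
  · rw [hh] at fx1
    refine ⟨L2 hK hd h H fx1, ?_⟩
    rw [← hseteq]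
    exact L3 hK hd hrefl H (t12 c1 c2 c4 ▸ fx1)
  · rw [hh] at fx1
    refine ⟨L3 hK hd h H fx1, ?_⟩
    rw [← hseteq]
    exact L2 hK hd hrefl H (t12 c1 c2 c5 ▸ fx1)

end OppFaces

set_option maxHeartbeats 1000000 in
/-- In a connected combinatorial 2-manifold on more than `7` vertices with all vertex
degrees `6`, for any vertex `u` there are faces `uab` and `vab` with `uv` a non-edge. -/
theorem exists_opposite_faces {V : Type} [DecidableEq V] [Fintype V]
    (K : SComplex V) (hK : K.IsClosedSurface) (hc : K.Connected)
    (hd : ∀ v : V, K.degree v = 6) (hn : 7 < Fintype.card V) (u : V) :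
    ∃ a b v : V, ({u, a, b} : Finset V) ∈ K.faces ∧ ({v, a, b} : Finset V) ∈ K.faces ∧
      u ≠ v ∧ ({u, v} : Finset V) ∉ K.edges := by
  classical
  by_contra hcon
  push_neg at hcon
  obtain ⟨c1, c2, c3, c4, c5, c6, hcyc⟩ := OppFaces.exists_cyc hK hd u
  have r1 := OppFaces.cyc_rot hcyc
  have r2 := OppFaces.cyc_rot r1
  have r3 := OppFaces.cyc_rot r2
  have r4 := OppFaces.cyc_rot r3
  have hs12 := OppFaces.pair_sub hK hd hcyc hcon
  have hs34 := OppFaces.pair_sub hK hd r2 hcon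
  have hs56 := OppFaces.pair_sub hK hd r4 hcon
  have heq34 : ({u,c3,c4,c5,c6,c1,c2} : Finset V) = {u,c1,c2,c3,c4,c5,c6} := by
    ext x; simp; tauto
  have heq56 : ({u,c5,c6,c1,c2,c3,c4} : Finset V) = {u,c1,c2,c3,c4,c5,c6} := by
    ext x; simp; tauto
  rw [heq34] at hs34
  rw [heq56] at hs56
  have hnb := hcyc.2.2.2
  -- every vertex reachable from u lies in the closed star
  have hreach : ∀ y, Relation.ReflTransGen
      (fun a b => ({a, b} : Finset V) ∈ K.edges) u y →
      y ∈ ({u,c1,c2,c3,c4,c5,c6} : Finset V) := by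
    intro y hy
    induction hy with
    | refl => simp
    | @tail b c h1 h2 ih =>
      simp only [Finset.mem_insert, Finset.mem_singleton] at ih ⊢
      rcases ih with hh|hh|hh|hh|hh|hh|hh <;> rw [hh] at h2
      · rcases hnb c h2 with he|he|he|he|he|he <;> simp [he]
      · have := hs12.1 (OppFaces.mem_Nb.2 h2)
        simp only [Finset.mem_insert, Finset.mem_singleton] at this
        exact this
      · have := hs12.2 (OppFaces.mem_Nb.2 h2)
        simp only [Finset.mem_insert, Finset.mem_singleton] at this
        exact this
      · have := hs34.1 (OppFaces.mem_Nb.2 h2)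
        simp only [Finset.mem_insert, Finset.mem_singleton] at this
        exact this
      · have := hs34.2 (OppFaces.mem_Nb.2 h2)
        simp only [Finset.mem_insert, Finset.mem_singleton] at this
        exact this
      · have := hs56.1 (OppFaces.mem_Nb.2 h2)
        simp only [Finset.mem_insert, Finset.mem_singleton] at this
        exact this
      · have := hs56.2 (OppFaces.mem_Nb.2 h2)
        simp only [Finset.mem_insert, Finset.mem_singleton] at this
        exact this
  have hbig : ¬ (Finset.univ : Finset V) ⊆ ({u,c1,c2,c3,c4,c5,c6} : Finset V) := by
    intro hsub
    have hcard := Finset.card_le_card hsub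
    rw [Finset.card_univ] at hcard
    have := OppFaces.card_le7 u c1 c2 c3 c4 c5 c6
    omega
  obtain ⟨z, _, hzns⟩ := Finset.not_subset.1 hbig
  exact hzns (hreach z (hc u z))
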